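/- Let 𝓘 be a finite set, Δ : 𝓘 → ℝ₊ with Δ(S) ≥ 1, and (μ_S) a probability distribution on 𝓘. For each node i with γᵢ = Σ_{S : i∈S} μ_S > 0, define E[Sᵢ] = (Σ_{S:i∈S}Δ(S)μ_S)/γᵢ, E[Sᵢ²] = (Σ_{S:i∈S}Δ(S)²μ_S)/γᵢ, E[Wᵢ] = (Σ_{S:i∉S}Δ(S)μ_S)/γᵢ, and E[Wᵢ²] = (Σ_{S:i∉S}Δ(S)²μ_S + 2(Σ_{S:i∉S}Δ(S)μ_S)²/γᵢ)/γᵢ. Then the expression (E[Wᵢ²] + 2E[Wᵢ]E[Sᵢ] + E[Sᵢ²])/(2E[Wᵢ] + 2E[Sᵢ]) + E[Sᵢ] + 1/2 simplifies algebraically to (Σ_S Δ(S)²μ_S)/(2 Σ_S Δ(S)μ_S) + (Σ_S Δ(S)μ_S)/γᵢ + 1/2. -/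
import Mathlib


/-- Algebraic core of the closed-form AoI of a stationary randomized policy
(Theorem 4.1): with the mean waiting/service moments of node `i`, the
per-node AoI expression reduces to a common dispersion term plus the
throughput term `(Σ_S Δ S μ S)/γᵢ`. -/
theorem stmt_5 {ι : Type*} [DecidableEq ι] (I : Finset (Finset ι))
    (μ Δ : Finset ι → ℝ) (i : ι)
    (hμ0 : ∀ S ∈ I, 0 ≤ μ S) (hμ1 : ∑ S ∈ I, μ S = 1)
    (hΔ : ∀ S ∈ I, 1 ≤ Δ S)
    (hγ : 0 < ∑ S ∈ I.filter (fun S => i ∈ S), μ S) :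
    let γ : ℝ := ∑ S ∈ I.filter (fun S => i ∈ S), μ S
    let ES : ℝ := (∑ S ∈ I.filter (fun S => i ∈ S), Δ S * μ S) / γ
    let ES2 : ℝ := (∑ S ∈ I.filter (fun S => i ∈ S), (Δ S) ^ 2 * μ S) / γ
    let EW : ℝ := (∑ S ∈ I.filter (fun S => i ∉ S), Δ S * μ S) / γ
    let EW2 : ℝ := ((∑ S ∈ I.filter (fun S => i ∉ S), (Δ S) ^ 2 * μ S)
        + 2 * (∑ S ∈ I.filter (fun S => i ∉ S), Δ S * μ S) ^ 2 / γ) / γ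
    (EW2 + 2 * EW * ES + ES2) / (2 * EW + 2 * ES) + ES + 1 / 2
      = (∑ S ∈ I, (Δ S) ^ 2 * μ S) / (2 * ∑ S ∈ I, Δ S * μ S)
        + (∑ S ∈ I, Δ S * μ S) / γ + 1 / 2 := by
  intro γ ES ES2 EW EW2
  set ain : ℝ := ∑ S ∈ I.filter (fun S => i ∈ S), Δ S * μ S with hain
  set aout : ℝ := ∑ S ∈ I.filter (fun S => i ∉ S), Δ S * μ S with haout
  set bin : ℝ := ∑ S ∈ I.filter (fun S => i ∈ S), (Δ S) ^ 2 * μ S with hbin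
  set bout : ℝ := ∑ S ∈ I.filter (fun S => i ∉ S), (Δ S) ^ 2 * μ S with hbout
  have hsplit : (∑ S ∈ I, Δ S * μ S) = ain + aout := by
    rw [hain, haout, Finset.sum_filter_add_sum_filter_not]
  have hsplit2 : (∑ S ∈ I, (Δ S) ^ 2 * μ S) = bin + bout := by
    rw [hbin, hbout, Finset.sum_filter_add_sum_filter_not]
  have hain_ge : γ ≤ ain := by
    apply Finset.sum_le_sum
    intro S hS
    have hSI : S ∈ I := Finset.mem_of_mem_filter S hS
    nlinarith [hμ0 S hSI, hΔ S hSI]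
  have haout_nn : 0 ≤ aout := by
    apply Finset.sum_nonneg
    intro S hS
    have hSI : S ∈ I := Finset.mem_of_mem_filter S hS
    nlinarith [hμ0 S hSI, hΔ S hSI]
  have hγ0 : (0:ℝ) < γ := hγ
  have ha : (0:ℝ) < ain + aout := by linarith
  have hne : 2 * EW + 2 * ES ≠ 0 := by
    have : 2 * EW + 2 * ES = 2 * (ain + aout) / γ := by
      simp only [EW, ES]; field_simp; ring
    rw [this]
    positivity
  have hγne : γ ≠ 0 := ne_of_gt hγ0
  have hane : ain + aout ≠ 0 := ne_of_gt ha
  simp only [EW2, EW, ES, ES2, hsplit, hsplit2]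
  rw [← hain, ← haout, ← hbin, ← hbout]
  rw [show 2 * (aout / γ) + 2 * (ain / γ) = (2 * (ain + aout)) / γ from by ring]
  rw [div_div_eq_mul_div]
  field_simp
  ring
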